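/- In the MHW swaption setting, let ξ* be the unique zero of f and let μ be the centered Gaussian measure on ℝ with variance ζ². Then the (undiscounted) receiver swaption value satisfies ∫_ℝ max(f(x), 0) dμ(x) = Σ_{j=α+1}^{ω} c_j B_{αj} Φ(ξ*/ζ + ζ ς_{αj}) + Σ_{ι=α'+1}^{ω'−1} B_{α'ι} Φ(ξ*/ζ + ζ ς_{α'ι}) − Σ_{ι=α'}^{ω'−1} β_ι B_{α'ι} Φ(ξ*/ζ + ζ ν_{α'ι}), where Φ is the standard normal cumulative distribution function. -/

import Mathlib

open Real MeasureTheory ProbabilityTheory Filter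
open scoped NNReal ENNReal

noncomputable def mhwVol (a σ τ : ℝ) : ℝ :=
  if a = 0 then σ * τ else σ * (1 - Real.exp (-(a * τ))) / a

/-- Standard normal cumulative distribution function. -/
noncomputable def stdNormalCDF (x : ℝ) : ℝ :=
  ∫ t in Set.Iic x, Real.exp (-t^2 / 2) / Real.sqrt (2 * Real.pi)

lemma mhwVol_zero (a σ : ℝ) : mhwVol a σ 0 = 0 := by
  unfold mhwVol; split <;> simp

lemma mhwVol_strictMono {a σ : ℝ} (ha : 0 ≤ a) (hσ : 0 < σ) : StrictMono (mhwVol a σ) := by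
  intro x y hxy
  unfold mhwVol
  split
  · exact mul_lt_mul_of_pos_left hxy hσ
  · rename_i h
    have ha' : 0 < a := lt_of_le_of_ne ha (Ne.symm h)
    have hexp : Real.exp (-(a*y)) < Real.exp (-(a*x)) := by
      apply Real.exp_lt_exp.mpr; nlinarith
    have h2 : σ * (1 - Real.exp (-(a*x))) < σ * (1 - Real.exp (-(a*y))) := by nlinarith
    rw [div_lt_div_iff₀ ha' ha']
    exact mul_lt_mul_of_pos_right h2 ha'

lemma chain_lt {u : ℕ → ℝ} {lo hi : ℕ} (h : ∀ j ∈ Finset.Ico lo hi, u j < u (j+1)) :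
    ∀ {j k : ℕ}, lo ≤ j → j < k → k ≤ hi → u j < u k := by
  intro j k
  induction k with
  | zero => intro _ h2 _; omega
  | succ n ih =>
    intro hj hjk hk
    rcases Nat.eq_or_lt_of_le (Nat.lt_succ_iff.mp hjk) with rfl | h'
    · exact h j (Finset.mem_Ico.mpr ⟨hj, by omega⟩)
    · exact lt_trans (ih hj h' (by omega)) (h n (Finset.mem_Ico.mpr ⟨by omega, by omega⟩))

lemma chain_le {u : ℕ → ℝ} {lo hi : ℕ} (h : ∀ j ∈ Finset.Ico lo hi, u j < u (j+1))
    {j k : ℕ} (hj : lo ≤ j) (hjk : j ≤ k) (hk : k ≤ hi) : u j ≤ u k := by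
  rcases Nat.eq_or_lt_of_le hjk with rfl | h'
  · exact le_rfl
  · exact (chain_lt h hj h' hk).le

lemma exp_mul_gaussianPDFReal (m : ℝ) (v : ℝ≥0) (hv : v ≠ 0) (s x : ℝ) :
    Real.exp (s*x) * gaussianPDFReal m v x
      = Real.exp (s*m + s^2*(v:ℝ)/2) * gaussianPDFReal (m + s*(v:ℝ)) v x := by
  have hv' : (v:ℝ) ≠ 0 := by exact_mod_cast hv
  unfold gaussianPDFReal
  have hmul : ∀ (cst u w : ℝ), Real.exp u * (cst * Real.exp w) = cst * Real.exp (u + w) := by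
    intro cst u w; rw [Real.exp_add]; ring
  rw [hmul, hmul]
  congr 1
  rw [Real.exp_eq_exp]
  field_simp
  ring

lemma integrable_exp_mul_gaussianReal (m : ℝ) {v : ℝ≥0} (hv : v ≠ 0) (c : ℝ) :
    Integrable (fun x => Real.exp (c * x)) (gaussianReal m v) := by
  rw [gaussianReal_of_var_ne_zero m hv,
    integrable_withDensity_iff (measurable_gaussianPDF m v)
      (ae_of_all _ fun x => ENNReal.ofReal_lt_top)]
  have heq : (fun x => Real.exp (c*x) * (gaussianPDF m v x).toReal)
      = fun x => Real.exp (c*m + c^2*(v:ℝ)/2) * gaussianPDFReal (m + c*(v:ℝ)) v x := by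
    funext x
    rw [gaussianPDF, ENNReal.toReal_ofReal (gaussianPDFReal_nonneg _ _ _),
      exp_mul_gaussianPDFReal m v hv c x]
  rw [heq]
  exact (integrable_gaussianPDFReal _ _).const_mul _

lemma integrable_term_gaussian (m : ℝ) {v : ℝ≥0} (hv : v ≠ 0) (p s d : ℝ) :
    Integrable (fun x => p * Real.exp (-s*x - d)) (gaussianReal m v) := by
  have heq : (fun x => p * Real.exp (-s*x - d))
      = fun x => (p * Real.exp (-d)) * Real.exp ((-s)*x) := by
    funext x
    rw [mul_assoc, ← Real.exp_add]
    ring_nf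
  rw [heq]
  exact (integrable_exp_mul_gaussianReal m hv (-s)).const_mul _

lemma stdNormalCDF_eq_measure (y : ℝ) :
    stdNormalCDF y = (gaussianReal 0 1 (Set.Iic y)).toReal := by
  rw [gaussianReal_apply_eq_integral 0 one_ne_zero, ENNReal.toReal_ofReal
    (setIntegral_nonneg measurableSet_Iic fun x _ => gaussianPDFReal_nonneg _ _ _)]
  unfold stdNormalCDF
  have h : ∀ x : ℝ, Real.exp (-x^2/2) / Real.sqrt (2*π) = gaussianPDFReal 0 1 x := by
    intro x
    unfold gaussianPDFReal
    push_cast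
    rw [mul_one, sub_zero, mul_one, div_eq_inv_mul]
  simp only [h]
lemma gauss_exp_Iic (ζ : ℝ) (hζ : 0 < ζ) (s b : ℝ) :
    ∫ x in Set.Iic b, Real.exp (-s * x - s^2 * ζ^2 / 2)
      ∂(gaussianReal 0 ⟨ζ^2, sq_nonneg ζ⟩) = stdNormalCDF (b / ζ + ζ * s) := by
  set v : ℝ≥0 := ⟨ζ^2, sq_nonneg ζ⟩ with hvdef
  have hvr : (v:ℝ) = ζ^2 := rfl
  have hv : v ≠ 0 := by
    intro h
    have h2 : (v:ℝ) = ((0:ℝ≥0):ℝ) := by rw [h]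
    rw [hvr] at h2
    simp at h2
    exact absurd h2 hζ.ne'
  rw [gaussianReal_of_var_ne_zero 0 hv]
  have hpdf_eq : volume.withDensity (gaussianPDF 0 v)
      = volume.withDensity (fun x => ((gaussianPDFReal 0 v x).toNNReal : ℝ≥0∞)) := rfl
  rw [hpdf_eq, setIntegral_withDensity_eq_setIntegral_smul
    (measurable_gaussianPDFReal 0 v).real_toNNReal _ measurableSet_Iic]
  have h2 : ∀ x : ℝ, (gaussianPDFReal 0 v x).toNNReal • Real.exp (-s * x - s^2 * ζ^2 / 2)
      = gaussianPDFReal (-(s*ζ^2)) v x := by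
    intro x
    rw [NNReal.smul_def, Real.coe_toNNReal _ (gaussianPDFReal_nonneg _ _ _), smul_eq_mul,
      mul_comm (gaussianPDFReal 0 v x)]
    rw [show (-s * x - s^2*ζ^2/2) = (-(s^2*ζ^2/2)) + (-s)*x by ring, Real.exp_add, mul_assoc,
      exp_mul_gaussianPDFReal 0 v hv (-s) x, ← mul_assoc, ← Real.exp_add]
    rw [show (-(s^2*ζ^2/2)) + ((-s)*0 + (-s)^2*(v:ℝ)/2) = 0 by rw [hvr]; ring, Real.exp_zero,
      one_mul]
    congr 1
    rw [hvr]; ring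
  simp only [h2]
  have h3 : ∫ x in Set.Iic b, gaussianPDFReal (-(s*ζ^2)) v x
      = (gaussianReal (-(s*ζ^2)) v (Set.Iic b)).toReal := by
    rw [gaussianReal_apply_eq_integral _ hv, ENNReal.toReal_ofReal
      (setIntegral_nonneg measurableSet_Iic fun x _ => gaussianPDFReal_nonneg _ _ _)]
  rw [h3]
  have hmap1 : Measure.map (fun x => ζ * x) (gaussianReal 0 1) = gaussianReal 0 v := by
    have h := gaussianReal_map_const_mul (μ := 0) (v := 1) ζ
    rw [h]
    congr 1
    · simp
    · ext; simp [hvdef]; rfl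
  have hmap2 : Measure.map (fun x => x + (-(s*ζ^2))) (gaussianReal 0 v)
      = gaussianReal (-(s*ζ^2)) v := by
    have h := gaussianReal_map_add_const (μ := 0) (v := v) (-(s*ζ^2))
    simpa using h
  have hmap : Measure.map (fun x => ζ * x + (-(s*ζ^2))) (gaussianReal 0 1)
      = gaussianReal (-(s*ζ^2)) v := by
    rw [← hmap2, ← hmap1, Measure.map_map (by fun_prop) (by fun_prop)]
    rfl
  rw [← hmap, Measure.map_apply (by fun_prop) measurableSet_Iic]
  have hpre : (fun x => ζ * x + (-(s*ζ^2))) ⁻¹' (Set.Iic b) = Set.Iic (b/ζ + ζ*s) := by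
    ext x
    simp only [Set.mem_preimage, Set.mem_Iic]
    rw [show b/ζ + ζ*s = (b + s*ζ^2)/ζ by field_simp, le_div_iff₀ hζ]
    constructor <;> intro h <;> nlinarith
  rw [hpre]
  exact (stdNormalCDF_eq_measure _).symm

lemma gauss_sum_integral (ζ : ℝ) (hζ : 0 < ζ) (b : ℝ) (s : Finset ℕ) (p g : ℕ → ℝ) :
    ∫ x in Set.Iic b, (∑ i ∈ s, p i * Real.exp (-(g i) * x - (g i)^2 * ζ^2 / 2))
      ∂(gaussianReal 0 ⟨ζ^2, sq_nonneg ζ⟩)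
    = ∑ i ∈ s, p i * stdNormalCDF (b / ζ + ζ * g i) := by
  have hv : (⟨ζ^2, sq_nonneg ζ⟩ : ℝ≥0) ≠ 0 := by
    intro h
    have h2 : ζ^2 = ((0:ℝ≥0):ℝ) := by exact congrArg (fun x : ℝ≥0 => (x:ℝ)) h
    simp at h2
    exact absurd h2 hζ.ne'
  rw [integral_finset_sum s (fun i _ => (integrable_term_gaussian 0 hv (p i) (g i) _).restrict)]
  refine Finset.sum_congr rfl fun i _ => ?_
  rw [integral_const_mul, gauss_exp_Iic ζ hζ (g i) b]

lemma tendsto_exp_lin_atBot {c : ℝ} (hc : 0 ≤ c) (d : ℝ) :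
    Tendsto (fun ξ : ℝ => Real.exp (c * ξ - d)) atBot
      (nhds (if c = 0 then Real.exp (-d) else 0)) := by
  rcases hc.eq_or_lt with rfl | hpos
  · simpa using tendsto_const_nhds
  · rw [if_neg hpos.ne']
    have h1 : Tendsto (fun ξ : ℝ => c * ξ - d) atBot atBot := by
      have h2 : Tendsto (fun ξ : ℝ => c * ξ) atBot atBot :=
        (tendsto_const_mul_atBot_of_pos hpos).mpr tendsto_id
      simpa [sub_eq_add_neg] using tendsto_atBot_add_const_right atBot (-d) h2
    exact Real.tendsto_exp_atBot.comp h1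

lemma tendsto_exp_lin_atTop {c : ℝ} (hc : c ≤ 0) (d : ℝ) :
    Tendsto (fun ξ : ℝ => Real.exp (c * ξ - d)) atTop
      (nhds (if c = 0 then Real.exp (-d) else 0)) := by
  rcases hc.lt_or_eq with hneg | rfl
  · rw [if_neg hneg.ne]
    have h1 : Tendsto (fun ξ : ℝ => c * ξ - d) atTop atBot := by
      have h2 : Tendsto (fun ξ : ℝ => c * ξ) atTop atBot :=
        (tendsto_const_mul_atBot_of_neg hneg).mpr tendsto_id
      simpa [sub_eq_add_neg] using tendsto_atBot_add_const_right atTop (-d) h2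
    exact Real.tendsto_exp_atBot.comp h1
  · simpa using tendsto_const_nhds
lemma tendsto_exp_mul_sum_atBot (K : ℝ) (s : Finset ℕ) (p q d : ℕ → ℝ)
    (h : ∀ i ∈ s, q i ≤ K) :
    Tendsto (fun ξ : ℝ => ∑ i ∈ s, Real.exp (K*ξ) * (p i * Real.exp (-(q i) * ξ - d i))) atBot
      (nhds (∑ i ∈ s, p i * (if K = q i then Real.exp (-(d i)) else 0))) := by
  refine tendsto_finset_sum _ fun i hi => ?_
  have h1 := (tendsto_exp_lin_atBot (sub_nonneg.mpr (h i hi)) (d i)).const_mul (p i)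
  have h2 : (if K - q i = 0 then Real.exp (-(d i)) else 0)
      = (if K = q i then Real.exp (-(d i)) else 0) := by
    simp only [sub_eq_zero]
  rw [h2] at h1
  refine h1.congr fun ξ => ?_
  rw [show (K - q i) * ξ - d i = K*ξ + (-(q i)*ξ - d i) by ring, Real.exp_add]; ring

lemma tendsto_exp_mul_sum_atTop (K : ℝ) (s : Finset ℕ) (p q d : ℕ → ℝ)
    (h : ∀ i ∈ s, K ≤ q i) :
    Tendsto (fun ξ : ℝ => ∑ i ∈ s, Real.exp (K*ξ) * (p i * Real.exp (-(q i) * ξ - d i))) atTop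
      (nhds (∑ i ∈ s, p i * (if K = q i then Real.exp (-(d i)) else 0))) := by
  refine tendsto_finset_sum _ fun i hi => ?_
  have h1 := (tendsto_exp_lin_atTop (sub_nonpos.mpr (h i hi)) (d i)).const_mul (p i)
  have h2 : (if K - q i = 0 then Real.exp (-(d i)) else 0)
      = (if K = q i then Real.exp (-(d i)) else 0) := by
    simp only [sub_eq_zero]
  rw [h2] at h1
  refine h1.congr fun ξ => ?_
  rw [show (K - q i) * ξ - d i = K*ξ + (-(q i)*ξ - d i) by ring, Real.exp_add]; ring

lemma sum_if_zero (s : Finset ℕ) (p d q : ℕ → ℝ) (K : ℝ) (h : ∀ i ∈ s, K ≠ q i) :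
    ∑ i ∈ s, p i * (if K = q i then Real.exp (-(d i)) else 0) = 0 :=
  Finset.sum_eq_zero fun i hi => by rw [if_neg (h i hi), mul_zero]

lemma sum_if_nonneg (s : Finset ℕ) (p d q : ℕ → ℝ) (K : ℝ) (h : ∀ i ∈ s, 0 ≤ p i) :
    0 ≤ ∑ i ∈ s, p i * (if K = q i then Real.exp (-(d i)) else 0) :=
  Finset.sum_nonneg fun i hi => mul_nonneg (h i hi) (by split <;> positivity)

lemma sum_if_pos (s : Finset ℕ) (p d q : ℕ → ℝ) (K : ℝ) (h : ∀ i ∈ s, 0 ≤ p i)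
    (i₀ : ℕ) (hi₀ : i₀ ∈ s) (hp : 0 < p i₀) (hK : K = q i₀) :
    0 < ∑ i ∈ s, p i * (if K = q i then Real.exp (-(d i)) else 0) :=
  Finset.sum_pos' (fun i hi => mul_nonneg (h i hi) (by split <;> positivity))
    ⟨i₀, hi₀, by rw [if_pos hK]; exact mul_pos hp (Real.exp_pos _)⟩
/-- Closed formula for the (undiscounted) receiver swaption value in the MHW model. -/
theorem mhw_swaption_formula
    (a σ γ ζ : ℝ) (ha : 0 ≤ a) (hσ : 0 < σ) (hγ0 : 0 ≤ γ) (hγ1 : γ ≤ 1) (hζ : 0 < ζ)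
    (α ω α' ω' : ℕ) (hω : α + 1 ≤ ω) (hω' : α' + 2 ≤ ω')
    (t t' : ℕ → ℝ)
    (ht : ∀ j ∈ Finset.Ico α ω, t j < t (j+1))
    (ht' : ∀ ι ∈ Finset.Ico α' ω', t' ι < t' (ι+1))
    (hstart : t' α' = t α) (hend : t' ω' = t ω)
    (c B : ℕ → ℝ) (hc : ∀ j ∈ Finset.Icc (α+1) ω, 0 < c j)
    (hB : ∀ j ∈ Finset.Icc (α+1) ω, 0 < B j)
    (B' β : ℕ → ℝ) (hB' : ∀ ι ∈ Finset.Ico α' ω', 0 < B' ι) (hB'α' : B' α' = 1)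
    (hβ : ∀ ι ∈ Finset.Ico α' ω', 1 ≤ β ι)
    (ς ς' ν : ℕ → ℝ)
    (hς : ∀ j, ς j = (1 - γ) * mhwVol a σ (t j - t α))
    (hς' : ∀ ι, ς' ι = (1 - γ) * mhwVol a σ (t' ι - t α))
    (hν : ∀ ι, ν ι = mhwVol a σ (t' ι - t α) - γ * mhwVol a σ (t' (ι+1) - t α))
    (f : ℝ → ℝ)
    (hf : ∀ ξ : ℝ, f ξ =
        (∑ j ∈ Finset.Icc (α+1) ω, c j * B j * Real.exp (-(ς j) * ξ - (ς j)^2 * ζ^2 / 2))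
      + (∑ ι ∈ Finset.Ico (α'+1) ω', B' ι * Real.exp (-(ς' ι) * ξ - (ς' ι)^2 * ζ^2 / 2))
      - (∑ ι ∈ Finset.Ico α' ω', β ι * B' ι * Real.exp (-(ν ι) * ξ - (ν ι)^2 * ζ^2 / 2)))
    (ξs : ℝ) (hξs : f ξs = 0) (huniq : ∀ ξ : ℝ, f ξ = 0 → ξ = ξs) :
    ∫ x, max (f x) 0 ∂(ProbabilityTheory.gaussianReal 0 ⟨ζ^2, sq_nonneg ζ⟩)
      = (∑ j ∈ Finset.Icc (α+1) ω, c j * B j * stdNormalCDF (ξs / ζ + ζ * ς j))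
        + (∑ ι ∈ Finset.Ico (α'+1) ω', B' ι * stdNormalCDF (ξs / ζ + ζ * ς' ι))
        - (∑ ι ∈ Finset.Ico α' ω', β ι * B' ι * stdNormalCDF (ξs / ζ + ζ * ν ι)) := by
  classical
  have hvm : StrictMono (mhwVol a σ) := mhwVol_strictMono ha hσ
  have hγ' : (0:ℝ) ≤ 1 - γ := by linarith
  have hv : (⟨ζ^2, sq_nonneg ζ⟩ : ℝ≥0) ≠ 0 := by
    intro h
    have h2 : ζ^2 = ((0:ℝ≥0):ℝ) := by exact congrArg (fun x : ℝ≥0 => (x:ℝ)) h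
    simp at h2
    exact absurd h2 hζ.ne'
  have hmemω : ω ∈ Finset.Icc (α+1) ω := Finset.mem_Icc.mpr ⟨hω, le_rfl⟩
  have hmemα' : α' ∈ Finset.Ico α' ω' := Finset.mem_Ico.mpr ⟨le_rfl, by omega⟩
  have hmem' : ∀ ι ∈ Finset.Ico (α'+1) ω', ι ∈ Finset.Ico α' ω' := by
    intro ι hι
    rw [Finset.mem_Ico] at *
    omega
  have hvol_nonneg : ∀ {τ : ℝ}, 0 ≤ τ → 0 ≤ mhwVol a σ τ := by
    intro τ hτ
    rw [← mhwVol_zero a σ]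
    exact hvm.monotone hτ
  have hvol_pos : ∀ {τ : ℝ}, 0 < τ → 0 < mhwVol a σ τ := by
    intro τ hτ
    rw [← mhwVol_zero a σ]
    exact hvm hτ
  have hςK : ∀ j ∈ Finset.Icc (α+1) ω, 0 ≤ ς j ∧ ς j ≤ ς ω := by
    intro j hj
    obtain ⟨hj1, hj2⟩ := Finset.mem_Icc.mp hj
    have h1 : t α ≤ t j := chain_le ht le_rfl (by omega) hj2
    have h2 : t j ≤ t ω := chain_le ht (by omega) hj2 le_rfl
    constructor
    · rw [hς]; exact mul_nonneg hγ' (hvol_nonneg (by linarith))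
    · rw [hς j, hς ω]
      exact mul_le_mul_of_nonneg_left (hvm.monotone (by linarith)) hγ'
  have hς'K : ∀ ι ∈ Finset.Ico (α'+1) ω', 0 ≤ ς' ι ∧ ς' ι ≤ ς ω := by
    intro ι hι
    obtain ⟨hι1, hι2⟩ := Finset.mem_Ico.mp hι
    have h1 : t α ≤ t' ι := by
      rw [← hstart]; exact chain_le ht' le_rfl (by omega) (by omega)
    have h2 : t' ι ≤ t ω := by
      rw [← hend]; exact chain_le ht' (by omega) (by omega) le_rfl
    constructor
    · rw [hς']; exact mul_nonneg hγ' (hvol_nonneg (by linarith))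
    · rw [hς', hς]
      exact mul_le_mul_of_nonneg_left (hvm.monotone (by linarith)) hγ'
  have hνK : ∀ ι ∈ Finset.Ico α' ω', ν ι < ς ω := by
    intro ι hι
    obtain ⟨hι1, hι2⟩ := Finset.mem_Ico.mp hι
    have ha1 : t' ι < t' (ι+1) := ht' ι hι
    have ha2 : t' (ι+1) ≤ t ω := by
      rw [← hend]; exact chain_le ht' (by omega) (by omega) le_rfl
    have hb1 : mhwVol a σ (t' ι - t α) < mhwVol a σ (t' (ι+1) - t α) := hvm (by linarith)
    have hb2 : mhwVol a σ (t' (ι+1) - t α) ≤ mhwVol a σ (t ω - t α) := hvm.monotone (by linarith)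
    rw [hν, hς]
    nlinarith [mul_le_mul_of_nonneg_left hb2 hγ']
  obtain ⟨ι₀, hι₀mem, hι₀min⟩ := Finset.exists_min_image (Finset.Ico α' ω') ν ⟨α', hmemα'⟩
  have hVp_pos : 0 < mhwVol a σ (t' (α'+1) - t α) := by
    have h1 : t' α' < t' (α'+1) := ht' α' hmemα'
    exact hvol_pos (by rw [← hstart]; linarith)
  have hνα' : ν α' = -(γ * mhwVol a σ (t' (α'+1) - t α)) := by
    rw [hν, hstart, sub_self, mhwVol_zero]; ring
  have hm0 : ν ι₀ ≤ 0 := by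
    have h1 := hι₀min α' hmemα'
    rw [hνα'] at h1
    nlinarith [mul_nonneg hγ0 hVp_pos.le]
  have hm_lt : ∀ s : ℝ, 0 ≤ s → (γ = 0 → 0 < s) → ν ι₀ < s := by
    intro s hs h0
    rcases hγ0.eq_or_lt with hγz | hγp
    · exact lt_of_le_of_lt hm0 (h0 hγz.symm)
    · have h1 := hι₀min α' hmemα'
      rw [hνα'] at h1
      nlinarith [mul_pos hγp hVp_pos]
  have hmς : ∀ j ∈ Finset.Icc (α+1) ω, ν ι₀ < ς j := by
    intro j hj
    refine hm_lt _ (hςK j hj).1 fun h0 => ?_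
    obtain ⟨hj1, hj2⟩ := Finset.mem_Icc.mp hj
    have h1 : t α < t j := chain_lt ht le_rfl (by omega) hj2
    have h2 := hvol_pos (show (0:ℝ) < t j - t α by linarith)
    rw [hς, h0]
    nlinarith
  have hmς' : ∀ ι ∈ Finset.Ico (α'+1) ω', ν ι₀ < ς' ι := by
    intro ι hι
    refine hm_lt _ (hς'K ι hι).1 fun h0 => ?_
    obtain ⟨hι1, hι2⟩ := Finset.mem_Ico.mp hι
    have h1 : t α < t' ι := by
      rw [← hstart]; exact chain_lt ht' le_rfl (by omega) (by omega)
    have h2 := hvol_pos (show (0:ℝ) < t' ι - t α by linarith)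
    rw [hς', h0]
    nlinarith
  have hfc : Continuous f := by
    rw [funext hf]
    refine (Continuous.add ?_ ?_).sub ?_ <;>
      exact continuous_finset_sum _ fun i _ => by fun_prop
  have hsplit : ∀ K : ℝ, (fun ξ => Real.exp (K*ξ) * f ξ) = fun ξ =>
      (∑ j ∈ Finset.Icc (α+1) ω,
        Real.exp (K*ξ) * (c j * B j * Real.exp (-(ς j) * ξ - (ς j)^2 * ζ^2 / 2)))
    + (∑ ι ∈ Finset.Ico (α'+1) ω',
        Real.exp (K*ξ) * (B' ι * Real.exp (-(ς' ι) * ξ - (ς' ι)^2 * ζ^2 / 2)))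
    - (∑ ι ∈ Finset.Ico α' ω',
        Real.exp (K*ξ) * (β ι * B' ι * Real.exp (-(ν ι) * ξ - (ν ι)^2 * ζ^2 / 2))) := by
    intro K
    funext ξ
    rw [hf ξ, mul_sub, mul_add, Finset.mul_sum, Finset.mul_sum, Finset.mul_sum]
  have hbot : ∀ᶠ ξ in atBot, 0 < f ξ := by
    have hL : Tendsto (fun ξ => Real.exp (ς ω * ξ) * f ξ) atBot (nhds (
        (∑ j ∈ Finset.Icc (α+1) ω,
          c j * B j * (if ς ω = ς j then Real.exp (-((ς j)^2 * ζ^2 / 2)) else 0))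
      + (∑ ι ∈ Finset.Ico (α'+1) ω',
          B' ι * (if ς ω = ς' ι then Real.exp (-((ς' ι)^2 * ζ^2 / 2)) else 0))
      - (∑ ι ∈ Finset.Ico α' ω',
          β ι * B' ι * (if ς ω = ν ι then Real.exp (-((ν ι)^2 * ζ^2 / 2)) else 0)))) := by
      rw [hsplit (ς ω)]
      exact ((tendsto_exp_mul_sum_atBot (ς ω) (Finset.Icc (α+1) ω) (fun j => c j * B j) ς
          (fun j => (ς j)^2 * ζ^2 / 2) (fun j hj => (hςK j hj).2)).add
        (tendsto_exp_mul_sum_atBot (ς ω) (Finset.Ico (α'+1) ω') B' ς'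
          (fun ι => (ς' ι)^2 * ζ^2 / 2) (fun ι hι => (hς'K ι hι).2))).sub
        (tendsto_exp_mul_sum_atBot (ς ω) (Finset.Ico α' ω') (fun ι => β ι * B' ι) ν
          (fun ι => (ν ι)^2 * ζ^2 / 2) (fun ι hι => (hνK ι hι).le))
    have hLpos : (0:ℝ) <
        (∑ j ∈ Finset.Icc (α+1) ω,
          c j * B j * (if ς ω = ς j then Real.exp (-((ς j)^2 * ζ^2 / 2)) else 0))
      + (∑ ι ∈ Finset.Ico (α'+1) ω',
          B' ι * (if ς ω = ς' ι then Real.exp (-((ς' ι)^2 * ζ^2 / 2)) else 0))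
      - (∑ ι ∈ Finset.Ico α' ω',
          β ι * B' ι * (if ς ω = ν ι then Real.exp (-((ν ι)^2 * ζ^2 / 2)) else 0)) := by
      rw [sum_if_zero (Finset.Ico α' ω') (fun ι => β ι * B' ι) (fun ι => (ν ι)^2 * ζ^2 / 2) ν
        (ς ω) (fun ι hι => (hνK ι hι).ne'), sub_zero]
      have h1 := sum_if_pos (Finset.Icc (α+1) ω) (fun j => c j * B j)
        (fun j => (ς j)^2 * ζ^2 / 2) ς (ς ω)
        (fun j hj => mul_nonneg (hc j hj).le (hB j hj).le) ω hmemω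
        (mul_pos (hc ω hmemω) (hB ω hmemω)) rfl
      have h2 := sum_if_nonneg (Finset.Ico (α'+1) ω') B' (fun ι => (ς' ι)^2 * ζ^2 / 2) ς' (ς ω)
        (fun ι hι => (hB' ι (hmem' ι hι)).le)
      linarith
    have hev := hL.eventually (eventually_gt_nhds hLpos)
    filter_upwards [hev] with ξ hξ
    nlinarith [Real.exp_pos (ς ω * ξ)]
  have htop : ∀ᶠ ξ in atTop, f ξ < 0 := by
    have hL : Tendsto (fun ξ => Real.exp (ν ι₀ * ξ) * f ξ) atTop (nhds (
        (∑ j ∈ Finset.Icc (α+1) ω,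
          c j * B j * (if ν ι₀ = ς j then Real.exp (-((ς j)^2 * ζ^2 / 2)) else 0))
      + (∑ ι ∈ Finset.Ico (α'+1) ω',
          B' ι * (if ν ι₀ = ς' ι then Real.exp (-((ς' ι)^2 * ζ^2 / 2)) else 0))
      - (∑ ι ∈ Finset.Ico α' ω',
          β ι * B' ι * (if ν ι₀ = ν ι then Real.exp (-((ν ι)^2 * ζ^2 / 2)) else 0)))) := by
      rw [hsplit (ν ι₀)]
      exact ((tendsto_exp_mul_sum_atTop (ν ι₀) (Finset.Icc (α+1) ω) (fun j => c j * B j) ς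
          (fun j => (ς j)^2 * ζ^2 / 2) (fun j hj => (hmς j hj).le)).add
        (tendsto_exp_mul_sum_atTop (ν ι₀) (Finset.Ico (α'+1) ω') B' ς'
          (fun ι => (ς' ι)^2 * ζ^2 / 2) (fun ι hι => (hmς' ι hι).le))).sub
        (tendsto_exp_mul_sum_atTop (ν ι₀) (Finset.Ico α' ω') (fun ι => β ι * B' ι) ν
          (fun ι => (ν ι)^2 * ζ^2 / 2) (fun ι hι => hι₀min ι hι))
    have hLneg :
        (∑ j ∈ Finset.Icc (α+1) ω,
          c j * B j * (if ν ι₀ = ς j then Real.exp (-((ς j)^2 * ζ^2 / 2)) else 0))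
      + (∑ ι ∈ Finset.Ico (α'+1) ω',
          B' ι * (if ν ι₀ = ς' ι then Real.exp (-((ς' ι)^2 * ζ^2 / 2)) else 0))
      - (∑ ι ∈ Finset.Ico α' ω',
          β ι * B' ι * (if ν ι₀ = ν ι then Real.exp (-((ν ι)^2 * ζ^2 / 2)) else 0)) < 0 := by
      rw [sum_if_zero (Finset.Icc (α+1) ω) (fun j => c j * B j) (fun j => (ς j)^2 * ζ^2 / 2) ς
          (ν ι₀) (fun j hj => (hmς j hj).ne),
        sum_if_zero (Finset.Ico (α'+1) ω') B' (fun ι => (ς' ι)^2 * ζ^2 / 2) ς'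
          (ν ι₀) (fun ι hι => (hmς' ι hι).ne), zero_add, zero_sub, neg_lt_zero]
      exact sum_if_pos (Finset.Ico α' ω') (fun ι => β ι * B' ι) (fun ι => (ν ι)^2 * ζ^2 / 2) ν
        (ν ι₀) (fun ι hι => mul_nonneg (by linarith [hβ ι hι]) (hB' ι hι).le) ι₀ hι₀mem
        (mul_pos (by linarith [hβ ι₀ hι₀mem]) (hB' ι₀ hι₀mem)) rfl
    have hev := hL.eventually (eventually_lt_nhds hLneg)
    filter_upwards [hev] with ξ hξ
    nlinarith [Real.exp_pos (ν ι₀ * ξ)]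
  have hpos_of_lt : ∀ x, x < ξs → 0 < f x := by
    intro x hx
    rcases lt_trichotomy (f x) 0 with hneg | h0 | hpos
    · obtain ⟨y, hy1, hy2⟩ := (hbot.and (eventually_lt_atBot x)).exists
      have hsub := intermediate_value_Icc' hy2.le hfc.continuousOn
      obtain ⟨z, hz, hz0⟩ := hsub ⟨hneg.le, hy1.le⟩
      rw [huniq z hz0] at hz
      exact absurd hz.2 (not_le.mpr hx)
    · exact absurd (huniq x h0) hx.ne
    · exact hpos
  have hneg_of_gt : ∀ x, ξs < x → f x < 0 := by
    intro x hx
    rcases lt_trichotomy (f x) 0 with hneg | h0 | hpos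
    · exact hneg
    · exact absurd (huniq x h0) hx.ne'
    · obtain ⟨y, hy1, hy2⟩ := (htop.and (eventually_gt_atTop x)).exists
      have hsub := intermediate_value_Icc' hy2.le hfc.continuousOn
      obtain ⟨z, hz, hz0⟩ := hsub ⟨hy1.le, hpos.le⟩
      rw [huniq z hz0] at hz
      exact absurd hz.1 (not_le.mpr hx)
  have hmax : ∀ x : ℝ, max (f x) 0 = Set.indicator (Set.Iic ξs) f x := by
    intro x
    rcases lt_trichotomy x ξs with h | h | h
    · rw [Set.indicator_of_mem (Set.mem_Iic.mpr h.le), max_eq_left (hpos_of_lt x h).le]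
    · rw [h, Set.indicator_of_mem (Set.mem_Iic.mpr le_rfl), hξs]
      exact max_self 0
    · have hnot : x ∉ Set.Iic ξs := by simp only [Set.mem_Iic, not_le]; exact h
      rw [Set.indicator_of_notMem hnot, max_eq_right (hneg_of_gt x h).le]
  rw [show (fun x => max (f x) 0) = fun x => Set.indicator (Set.Iic ξs) f x from funext hmax,
    integral_indicator measurableSet_Iic]
  have hI1 : Integrable (fun x => ∑ j ∈ Finset.Icc (α+1) ω,
      c j * B j * Real.exp (-(ς j) * x - (ς j)^2 * ζ^2 / 2))
      ((gaussianReal 0 ⟨ζ^2, sq_nonneg ζ⟩).restrict (Set.Iic ξs)) :=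
    integrable_finset_sum _ fun j _ =>
      (integrable_term_gaussian 0 hv (c j * B j) (ς j) _).restrict
  have hI2 : Integrable (fun x => ∑ ι ∈ Finset.Ico (α'+1) ω',
      B' ι * Real.exp (-(ς' ι) * x - (ς' ι)^2 * ζ^2 / 2))
      ((gaussianReal 0 ⟨ζ^2, sq_nonneg ζ⟩).restrict (Set.Iic ξs)) :=
    integrable_finset_sum _ fun ι _ =>
      (integrable_term_gaussian 0 hv (B' ι) (ς' ι) _).restrict
  have hI3 : Integrable (fun x => ∑ ι ∈ Finset.Ico α' ω',
      β ι * B' ι * Real.exp (-(ν ι) * x - (ν ι)^2 * ζ^2 / 2))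
      ((gaussianReal 0 ⟨ζ^2, sq_nonneg ζ⟩).restrict (Set.Iic ξs)) :=
    integrable_finset_sum _ fun ι _ =>
      (integrable_term_gaussian 0 hv (β ι * B' ι) (ν ι) _).restrict
  have hI12 : Integrable (fun x =>
      (∑ j ∈ Finset.Icc (α+1) ω, c j * B j * Real.exp (-(ς j) * x - (ς j)^2 * ζ^2 / 2))
    + (∑ ι ∈ Finset.Ico (α'+1) ω', B' ι * Real.exp (-(ς' ι) * x - (ς' ι)^2 * ζ^2 / 2)))
      ((gaussianReal 0 ⟨ζ^2, sq_nonneg ζ⟩).restrict (Set.Iic ξs)) := hI1.add hI2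
  simp only [hf]
  rw [integral_sub hI12 hI3, integral_add hI1 hI2,
    gauss_sum_integral ζ hζ ξs (Finset.Icc (α+1) ω) (fun j => c j * B j) ς,
    gauss_sum_integral ζ hζ ξs (Finset.Ico (α'+1) ω') B' ς',
    gauss_sum_integral ζ hζ ξs (Finset.Ico α' ω') (fun ι => β ι * B' ι) ν]
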